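/- For any function x : [0,1] → ℝ with absolutely continuous derivative, x'' ∈ L^∞, x(0)=x(1), x'(0)=x'(1), and ∫_0^1 x(t) dt = 0, one has max_{t∈[0,1]} |x(t)| ≤ (1/32)·ess sup_{t∈[0,1]} |x''(t)|. -/

import Mathlib

open MeasureTheory intervalIntegral
/-- `x` belongs to `AC^{n-1}([0,T])`, its (a.e.) `n`-th derivative is `g`, and all the
derivatives of order `< n` satisfy the periodic boundary conditions `x⁽ⁱ⁾(0) = x⁽ⁱ⁾(T)`. -/
def PeriodicACSol (n : ℕ) (T : ℝ) (x g : ℝ → ℝ) : Prop :=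
  ∃ D : ℕ → ℝ → ℝ,
    D 0 = x ∧ D n = g ∧
    ∀ i < n,
      IntervalIntegrable (D (i + 1)) volume 0 T ∧
      (∀ t ∈ Set.Icc (0 : ℝ) T, D i t = D i 0 + ∫ s in (0 : ℝ)..t, D (i + 1) s) ∧
      D i 0 = D i T

lemma swap_lemma (b : ℝ) (hb : 0 ≤ b) (g : ℝ → ℝ)
    (hg : IntervalIntegrable g volume 0 b) (k : ℝ → ℝ → ℝ)
    (hk : Continuous fun p : ℝ × ℝ => k p.1 p.2) :
    (∫ t in (0:ℝ)..b, ∫ u in (0:ℝ)..t, k t u * g u)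
      = ∫ u in (0:ℝ)..b, (∫ t in u..b, k t u) * g u := by
  set μ := volume.restrict (Set.Ioc (0:ℝ) b) with hμ
  haveI hfin : IsFiniteMeasure μ := by
    constructor
    rw [hμ, Measure.restrict_apply_univ, Real.volume_Ioc]
    exact ENNReal.ofReal_lt_top
  have hgμ : Integrable g μ := by
    rw [intervalIntegrable_iff, Set.uIoc_of_le hb] at hg
    exact hg
  obtain ⟨C, hC⟩ := (isCompact_Icc.prod isCompact_Icc).exists_bound_of_continuousOn
    (s := Set.Icc (0:ℝ) b ×ˢ Set.Icc (0:ℝ) b) hk.continuousOn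
  set e : ℝ × ℝ → ℝ := fun p => (if p.2 ≤ p.1 then k p.1 p.2 else 0) * g p.2 with he
  have hφm : Measurable fun p : ℝ × ℝ => (if p.2 ≤ p.1 then k p.1 p.2 else 0) :=
    Measurable.ite (measurableSet_le measurable_snd measurable_fst) hk.measurable
      measurable_const
  have hgsnd : Integrable (fun p : ℝ × ℝ => g p.2) (μ.prod μ) := by
    have hm : AEStronglyMeasurable (fun p : ℝ × ℝ => g p.2) (μ.prod μ) :=
      (hgμ.aemeasurable.comp_snd).aestronglyMeasurable
    rw [integrable_prod_iff hm]
    refine ⟨Filter.Eventually.of_forall fun _ => hgμ, ?_⟩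
    simpa using integrable_const (μ := μ) (∫ y, ‖g y‖ ∂μ)
  have hem : AEStronglyMeasurable e (μ.prod μ) :=
    (hφm.aestronglyMeasurable).mul hgsnd.aestronglyMeasurable
  have hae : ∀ᵐ p ∂(μ.prod μ), p ∈ Set.Ioc (0:ℝ) b ×ˢ Set.Ioc (0:ℝ) b := by
    rw [hμ, Measure.prod_restrict]
    exact ae_restrict_mem (measurableSet_Ioc.prod measurableSet_Ioc)
  have heint : Integrable e (μ.prod μ) := by
    apply (hgsnd.norm.const_mul (max C 0)).mono' hem
    filter_upwards [hae] with p hp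
    have hsq : p ∈ Set.Icc (0:ℝ) b ×ˢ Set.Icc (0:ℝ) b :=
      ⟨Set.Ioc_subset_Icc_self hp.1, Set.Ioc_subset_Icc_self hp.2⟩
    have hb1 : ‖(if p.2 ≤ p.1 then k p.1 p.2 else 0)‖ ≤ max C 0 := by
      split_ifs
      · exact le_max_of_le_left (hC p hsq)
      · simp
    calc ‖e p‖ = ‖(if p.2 ≤ p.1 then k p.1 p.2 else 0)‖ * ‖g p.2‖ := by
          rw [he]; exact norm_mul _ _
      _ ≤ max C 0 * ‖g p.2‖ := mul_le_mul_of_nonneg_right hb1 (norm_nonneg _)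
  have hswap := integral_integral_swap (f := fun t u => e (t, u)) (μ := μ) (ν := μ) heint
  have hL : (∫ t in (0:ℝ)..b, ∫ u in (0:ℝ)..t, k t u * g u)
      = ∫ t, (∫ u, e (t, u) ∂μ) ∂μ := by
    rw [integral_of_le hb]
    apply setIntegral_congr_ae measurableSet_Ioc
    apply Filter.Eventually.of_forall
    intro t ht
    have hset : Set.Iic t ∩ Set.Ioc (0:ℝ) b = Set.Ioc 0 t := by
      ext u
      constructor
      · exact fun h => ⟨h.2.1, h.1⟩
      · exact fun h => ⟨h.2, h.1, h.2.trans ht.2⟩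
    have : (∫ u, e (t, u) ∂μ) = ∫ u in Set.Ioc (0:ℝ) t, k t u * g u := by
      have hind : ∀ u, e (t, u) = Set.indicator (Set.Iic t) (fun u => k t u * g u) u := by
        intro u
        rw [he]
        simp only [Set.indicator, Set.mem_Iic]
        split_ifs <;> simp
      rw [integral_congr_ae (Filter.Eventually.of_forall hind),
        MeasureTheory.integral_indicator measurableSet_Iic, hμ,
        Measure.restrict_restrict measurableSet_Iic, hset]
    rw [this, integral_of_le ht.1.le]
  have hR : (∫ u in (0:ℝ)..b, (∫ t in u..b, k t u) * g u)
      = ∫ u, (∫ t, e (t, u) ∂μ) ∂μ := by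
    rw [integral_of_le hb]
    apply setIntegral_congr_ae measurableSet_Ioc
    apply Filter.Eventually.of_forall
    intro u hu
    have hset : Set.Ici u ∩ Set.Ioc (0:ℝ) b = Set.Icc u b := by
      ext t
      constructor
      · exact fun h => ⟨h.1, h.2.2⟩
      · exact fun h => ⟨h.1, hu.1.trans_le h.1, h.2⟩
    have : (∫ t, e (t, u) ∂μ) = (∫ t in Set.Icc u b, k t u) * g u := by
      have hcg : ∀ t, e (t, u) = (if u ≤ t then k t u else 0) * g u := fun t => by rw [he]
      rw [integral_congr_ae (Filter.Eventually.of_forall hcg), MeasureTheory.integral_mul_const]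
      congr 1
      have hind : ∀ t, (if u ≤ t then k t u else 0)
          = Set.indicator (Set.Ici u) (fun t => k t u) t := by
        intro t
        simp only [Set.indicator, Set.mem_Ici]
      rw [integral_congr_ae (Filter.Eventually.of_forall hind),
        MeasureTheory.integral_indicator measurableSet_Ici, hμ,
        Measure.restrict_restrict measurableSet_Ici, hset]
    rw [this, ← Measure.restrict_congr_set MeasureTheory.Ioc_ae_eq_Icc, integral_of_le hu.2]
  rw [hL, hR]
  exact hswap

noncomputable def Pker (v : ℝ) : ℝ := -(v^2/2 - v/2 + 3/32)

lemma Pker_cont : Continuous Pker := by unfold Pker; continuity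

lemma integral_Pker (a b : ℝ) :
    ∫ v in a..b, Pker v = -(b^3/6 - b^2/4 + 3*b/32) + (a^3/6 - a^2/4 + 3*a/32) := by
  have h : ∀ v ∈ Set.uIcc a b,
      HasDerivAt (fun v : ℝ => -(v^3/6 - v^2/4 + 3*v/32)) (Pker v) v := by
    intro v _
    have h3 : HasDerivAt (fun v : ℝ => v^3) (3 * v^2) v := by
      simpa using hasDerivAt_pow 3 v
    have h2 : HasDerivAt (fun v : ℝ => v^2) (2 * v) v := by
      simpa using hasDerivAt_pow 2 v
    have h1 : HasDerivAt (fun v : ℝ => 3*v) 3 v := by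
      simpa using (hasDerivAt_id v).const_mul 3
    have h := (((h3.div_const 6).sub (h2.div_const 4)).add (h1.div_const 32)).neg
    exact h.congr_deriv (by unfold Pker; ring)
  rw [integral_eq_sub_of_hasDerivAt h (Pker_cont.intervalIntegrable a b)]
  ring

lemma integral_abs_Pker : ∫ v in (0:ℝ)..1, |Pker v| = 1/32 := by
  have hc : Continuous fun v => |Pker v| := Pker_cont.abs
  have h1 : (∫ v in (0:ℝ)..(1/4), |Pker v|) + ∫ v in (1/4:ℝ)..1, |Pker v|
      = ∫ v in (0:ℝ)..1, |Pker v| :=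
    integral_add_adjacent_intervals (hc.intervalIntegrable _ _) (hc.intervalIntegrable _ _)
  have h2 : (∫ v in (1/4:ℝ)..(3/4), |Pker v|) + ∫ v in (3/4:ℝ)..1, |Pker v|
      = ∫ v in (1/4:ℝ)..1, |Pker v| :=
    integral_add_adjacent_intervals (hc.intervalIntegrable _ _) (hc.intervalIntegrable _ _)
  have e1 : (∫ v in (0:ℝ)..(1/4), |Pker v|) = ∫ v in (0:ℝ)..(1/4), -(Pker v) := by
    apply integral_congr
    intro v hv
    rw [Set.uIcc_of_le (by norm_num)] at hv
    have h := hv.1; have h' := hv.2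
    have : Pker v ≤ 0 := by unfold Pker; nlinarith
    simp [abs_of_nonpos this]
  have e2 : (∫ v in (1/4:ℝ)..(3/4), |Pker v|) = ∫ v in (1/4:ℝ)..(3/4), Pker v := by
    apply integral_congr
    intro v hv
    rw [Set.uIcc_of_le (by norm_num)] at hv
    have h := hv.1; have h' := hv.2
    have : 0 ≤ Pker v := by unfold Pker; nlinarith
    simp [abs_of_nonneg this]
  have e3 : (∫ v in (3/4:ℝ)..1, |Pker v|) = ∫ v in (3/4:ℝ)..1, -(Pker v) := by
    apply integral_congr
    intro v hv
    rw [Set.uIcc_of_le (by norm_num)] at hv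
    have h := hv.1; have h' := hv.2
    have : Pker v ≤ 0 := by unfold Pker; nlinarith
    simp [abs_of_nonpos this]
  rw [← h1, ← h2, e1, e2, e3, intervalIntegral.integral_neg, intervalIntegral.integral_neg, integral_Pker, integral_Pker,
    integral_Pker]
  norm_num

noncomputable def psiK (t u : ℝ) : ℝ := if u ≤ t then Pker (t - u) else Pker (t - u + 1)

/-- The Favard inequality for `n = 2` on `[0,1]` with the Favard constant `K₂ = 1/32`. -/
theorem favard_inequality_order_two (x g : ℝ → ℝ)
    (hsol : PeriodicACSol 2 1 x g)
    (hbd : ∃ M : ℝ, ∀ᵐ t ∂(volume.restrict (Set.Icc (0 : ℝ) 1)), |g t| ≤ M)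
    (hmean : (∫ t in (0 : ℝ)..1, x t) = 0) :
    ∀ t ∈ Set.Icc (0 : ℝ) 1,
      |x t| ≤ (1 / 32) * essSup (fun t => |g t|) (volume.restrict (Set.Icc (0 : ℝ) 1)) := by
  obtain ⟨D, hD0, hD2, hder⟩ := hsol
  have h0 := hder 0 (by norm_num)
  have h1 := hder 1 (by norm_num)
  have hy_int : IntervalIntegrable (D 1) volume 0 1 := by simpa using h0.1
  have hg_int : IntervalIntegrable g volume 0 1 := by
    have := h1.1; rw [show (1+1 : ℕ) = 2 from rfl, hD2] at this; exact this
  have hx_eq : ∀ t ∈ Set.Icc (0:ℝ) 1, x t = x 0 + ∫ s in (0:ℝ)..t, D 1 s := by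
    intro t ht; have := h0.2.1 t ht; rwa [hD0] at this
  have hy_eq : ∀ t ∈ Set.Icc (0:ℝ) 1, D 1 t = D 1 0 + ∫ s in (0:ℝ)..t, g s := by
    intro t ht; have := h1.2.1 t ht
    rwa [show (1+1 : ℕ) = 2 from rfl, hD2] at this
  have hx_bc : x 0 = x 1 := by have := h0.2.2; rwa [hD0] at this
  have hy_bc : D 1 0 = D 1 1 := h1.2.2
  set y0 := D 1 0 with hy0def
  set x0 := x 0 with hx0def
  -- integral of g over the period vanishes
  have hgzero : (∫ s in (0:ℝ)..1, g s) = 0 := by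
    have h := hy_eq 1 (by norm_num)
    rw [← hy_bc] at h; linarith
  -- g is integrable on subintervals
  have hgt : ∀ t ∈ Set.Icc (0:ℝ) 1, IntervalIntegrable g volume 0 t := by
    intro t ht
    apply hg_int.mono_set
    rw [Set.uIcc_of_le ht.1, Set.uIcc_of_le (by norm_num : (0:ℝ) ≤ 1)]
    exact Set.Icc_subset_Icc le_rfl ht.2
  have hgt' : ∀ t ∈ Set.Icc (0:ℝ) 1, IntervalIntegrable g volume t 1 := by
    intro t ht
    apply hg_int.mono_set
    rw [Set.uIcc_of_le ht.2, Set.uIcc_of_le (by norm_num : (0:ℝ) ≤ 1)]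
    exact Set.Icc_subset_Icc ht.1 le_rfl
  -- Fubini: iterated primitive
  have hF1 : ∀ t ∈ Set.Icc (0:ℝ) 1,
      (∫ s in (0:ℝ)..t, (∫ u in (0:ℝ)..s, g u)) = ∫ u in (0:ℝ)..t, (t - u) * g u := by
    intro t ht
    have h := swap_lemma t ht.1 g (hgt t ht) (fun _ _ => 1) continuous_const
    simp only [one_mul] at h
    rw [h]
    simp [intervalIntegral.integral_const, smul_eq_mul]
  -- first key representation
  have hRep1 : ∀ t ∈ Set.Icc (0:ℝ) 1,
      x t = x0 + y0 * t + ∫ u in (0:ℝ)..t, (t - u) * g u := by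
    intro t ht
    rw [hx_eq t ht, ← hF1 t ht]
    have hGr : (∫ s in (0:ℝ)..t, D 1 s)
        = ∫ s in (0:ℝ)..t, (y0 + ∫ u in (0:ℝ)..s, g u) := by
      apply integral_congr
      intro s hs
      rw [Set.uIcc_of_le ht.1] at hs
      exact hy_eq s ⟨hs.1, hs.2.trans ht.2⟩
    have hGint : IntervalIntegrable (fun s => ∫ u in (0:ℝ)..s, g u) volume 0 t := by
      apply ContinuousOn.intervalIntegrable
      apply (continuousOn_primitive_interval' hg_int _).mono
      · rw [Set.uIcc_of_le ht.1, Set.uIcc_of_le (by norm_num : (0:ℝ) ≤ 1)]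
        exact Set.Icc_subset_Icc le_rfl ht.2
      · rw [Set.uIcc_of_le (by norm_num : (0:ℝ) ≤ 1)]; norm_num
    rw [hGr, integral_add (intervalIntegrable_const) hGint, intervalIntegral.integral_const]
    simp [smul_eq_mul]
    ring
  -- value of y0
  set I1 : ℝ := ∫ u in (0:ℝ)..1, (1 - u) * g u with hI1
  set I2 : ℝ := ∫ u in (0:ℝ)..1, ((1 - u)^2/2) * g u with hI2
  have hy0 : y0 = -I1 := by
    have h := hRep1 1 (by norm_num)
    rw [← hx_bc] at h
    simp only [mul_one] at h
    rw [hI1]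
    linarith
  -- x is interval integrable
  have hxint : IntervalIntegrable x volume 0 1 := by
    rw [intervalIntegrable_iff, Set.uIoc_of_le (by norm_num : (0:ℝ) ≤ 1)]
    have hw : ContinuousOn (fun t => x0 + ∫ s in (0:ℝ)..t, D 1 s) (Set.Icc 0 1) := by
      apply ContinuousOn.add continuousOn_const
      have := continuousOn_primitive_interval' (a := 0) hy_int
        (by rw [Set.uIcc_of_le (by norm_num : (0:ℝ) ≤ 1)]; norm_num)
      rwa [Set.uIcc_of_le (by norm_num : (0:ℝ) ≤ 1)] at this
    have hwi : IntegrableOn (fun t => x0 + ∫ s in (0:ℝ)..t, D 1 s) (Set.Ioc 0 1) volume :=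
      (hw.integrableOn_Icc).mono_set Set.Ioc_subset_Icc_self
    apply hwi.congr_fun _ measurableSet_Ioc
    intro t ht
    exact (hx_eq t (Set.Ioc_subset_Icc_self ht)).symm
  -- value of x0
  have hx0 : x0 = -y0/2 - I2 := by
    have hswap2 := swap_lemma 1 (by norm_num) g hg_int (fun t u => t - u)
      (continuous_fst.sub continuous_snd)
    have hinner : ∀ u ∈ Set.uIcc (0:ℝ) 1,
        (∫ t in u..1, ((fun t u => t - u) t u)) * g u = ((1 - u)^2/2) * g u := by
      intro u _
      congr 1
      have : (∫ t in u..1, (t - u)) = (∫ t in u..1, t) - ∫ t in u..1, (u:ℝ) := by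
        apply integral_sub intervalIntegrable_id intervalIntegrable_const
      rw [this, integral_id, intervalIntegral.integral_const]
      simp [smul_eq_mul]
      ring
    have haff : IntervalIntegrable (fun t => x0 + y0 * t) volume 0 1 :=
      (continuous_const.add (continuous_const.mul continuous_id)).intervalIntegrable 0 1
    have hsub : (∫ t in (0:ℝ)..1, (x t - (x0 + y0 * t))) = -(x0 + y0/2) := by
      rw [integral_sub hxint haff, hmean, integral_add
        (intervalIntegrable_const (c := x0))
        (intervalIntegrable_id.const_mul y0)]
      rw [intervalIntegral.integral_const, intervalIntegral.integral_const_mul, integral_id]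
      simp [smul_eq_mul]
      ring
    have hcong : (∫ t in (0:ℝ)..1, (x t - (x0 + y0 * t)))
        = ∫ t in (0:ℝ)..1, (∫ u in (0:ℝ)..t, ((fun t u => t - u) t u) * g u) := by
      apply integral_congr
      intro t ht
      rw [Set.uIcc_of_le (by norm_num : (0:ℝ) ≤ 1)] at ht
      have := hRep1 t ht
      simp only []
      linarith
    rw [hcong, hswap2, integral_congr hinner] at hsub
    rw [hI2]
    linarith
  -- main part: fix t and build the kernel representation
  intro t ht
  have hg0t := hgt t ht
  have hgt1 := hgt' t ht
  have hcP1 : ContinuousOn (fun u : ℝ => Pker (t - u)) (Set.uIcc 0 t) :=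
    (Pker_cont.comp (continuous_const.sub continuous_id)).continuousOn
  have hcP2 : ContinuousOn (fun u : ℝ => Pker (t - u + 1)) (Set.uIcc t 1) :=
    (Pker_cont.comp ((continuous_const.sub continuous_id).add continuous_const)).continuousOn
  have hP1_int : IntervalIntegrable (fun u => Pker (t - u) * g u) volume 0 t :=
    hg0t.continuousOn_mul hcP1
  have hP2_int : IntervalIntegrable (fun u => Pker (t - u + 1) * g u) volume t 1 :=
    hgt1.continuousOn_mul hcP2
  have hpsileft : IntervalIntegrable (fun u => psiK t u * g u) volume 0 t := by
    rw [intervalIntegrable_iff] at hP1_int ⊢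
    apply hP1_int.congr_fun _ measurableSet_uIoc
    intro u hu
    rw [Set.uIoc_of_le ht.1] at hu
    simp only [psiK, if_pos hu.2]
  have hpsiright : IntervalIntegrable (fun u => psiK t u * g u) volume t 1 := by
    rw [intervalIntegrable_iff] at hP2_int ⊢
    apply hP2_int.congr_fun _ measurableSet_uIoc
    intro u hu
    rw [Set.uIoc_of_le ht.2] at hu
    simp only [psiK, if_neg (not_le.mpr hu.1)]
  have hpsi_int : IntervalIntegrable (fun u => psiK t u * g u) volume 0 1 :=
    hpsileft.trans hpsiright
  -- pointwise identities for the kernel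
  have hid1 : ∀ u : ℝ, Pker (t - u)
      = (-(1-u)*(t-1/2) - (1-u)^2/2 + Pker t) + (t - u) := by
    intro u; unfold Pker; ring
  have hid2 : ∀ u : ℝ, Pker (t - u + 1)
      = -(1-u)*(t-1/2) - (1-u)^2/2 + Pker t := by
    intro u; unfold Pker; ring
  have hbase : ∀ (a b : ℝ), IntervalIntegrable g volume a b →
      IntervalIntegrable (fun u => (-(1-u)*(t-1/2) - (1-u)^2/2 + Pker t) * g u) volume a b := by
    intro a b hgab
    exact hgab.continuousOn_mul (Continuous.continuousOn (by fun_prop))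
  have htu_int : IntervalIntegrable (fun u => (t - u) * g u) volume 0 t :=
    hg0t.continuousOn_mul (continuous_const.sub continuous_id).continuousOn
  have hseg1 : ∫ u in (0:ℝ)..t, psiK t u * g u
      = (∫ u in (0:ℝ)..t, (-(1-u)*(t-1/2) - (1-u)^2/2 + Pker t) * g u)
        + ∫ u in (0:ℝ)..t, (t - u) * g u := by
    have e1 : ∫ u in (0:ℝ)..t, psiK t u * g u
        = ∫ u in (0:ℝ)..t, ((-(1-u)*(t-1/2) - (1-u)^2/2 + Pker t) * g u + (t - u) * g u) := by
      apply integral_congr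
      intro u hu
      rw [Set.uIcc_of_le ht.1] at hu
      simp only [psiK, if_pos hu.2]
      rw [hid1 u]; ring
    rw [e1, integral_add (hbase 0 t hg0t) htu_int]
  have hseg2 : ∫ u in t..1, psiK t u * g u
      = ∫ u in t..1, (-(1-u)*(t-1/2) - (1-u)^2/2 + Pker t) * g u := by
    apply integral_congr
    intro u hu
    rw [Set.uIcc_of_le ht.2] at hu
    rcases eq_or_lt_of_le hu.1 with h | h
    · subst h
      simp only [psiK, le_refl, if_true]
      rw [← hid2 t]
      simp only [sub_self]
      norm_num [Pker]
    · simp only [psiK, if_neg (not_le.mpr h)]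
      rw [hid2 u]
  have hadj2 : (∫ u in (0:ℝ)..t, (-(1-u)*(t-1/2) - (1-u)^2/2 + Pker t) * g u)
      + ∫ u in t..1, (-(1-u)*(t-1/2) - (1-u)^2/2 + Pker t) * g u
      = ∫ u in (0:ℝ)..1, (-(1-u)*(t-1/2) - (1-u)^2/2 + Pker t) * g u :=
    integral_add_adjacent_intervals (hbase 0 t hg0t) (hbase t 1 hgt1)
  -- linear expansion of the base integral
  have hI1int : IntervalIntegrable (fun u => (1 - u) * g u) volume 0 1 :=
    hg_int.continuousOn_mul (continuous_const.sub continuous_id).continuousOn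
  have hI2int : IntervalIntegrable (fun u => ((1 - u)^2/2) * g u) volume 0 1 :=
    hg_int.continuousOn_mul ((((continuous_const.sub continuous_id).pow 2)).div_const 2).continuousOn
  have hlin : ∫ u in (0:ℝ)..1, (-(1-u)*(t-1/2) - (1-u)^2/2 + Pker t) * g u
      = (-(t-1/2)) * I1 + ((-1) * I2 + Pker t * ∫ u in (0:ℝ)..1, g u) := by
    have e : ∫ u in (0:ℝ)..1, (-(1-u)*(t-1/2) - (1-u)^2/2 + Pker t) * g u
        = ∫ u in (0:ℝ)..1, ((-(t-1/2)) * ((1 - u) * g u)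
            + ((-1) * (((1 - u)^2/2) * g u) + Pker t * g u)) := by
      apply integral_congr
      intro u _
      ring
    rw [e, integral_add (hI1int.const_mul _) ((hI2int.const_mul _).add (hg_int.const_mul _)),
      integral_add (hI2int.const_mul _) (hg_int.const_mul _),
      intervalIntegral.integral_const_mul, intervalIntegral.integral_const_mul,
      intervalIntegral.integral_const_mul]
  -- the kernel representation of x t
  have hxrep : x t = ∫ u in (0:ℝ)..1, psiK t u * g u := by
    rw [← integral_add_adjacent_intervals hpsileft hpsiright, hseg1, hseg2]
    rw [hRep1 t ht]
    have : (∫ u in (0:ℝ)..t, (-(1-u)*(t-1/2) - (1-u)^2/2 + Pker t) * g u)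
        + ∫ u in t..1, (-(1-u)*(t-1/2) - (1-u)^2/2 + Pker t) * g u
        = (-(t-1/2)) * I1 + ((-1) * I2 + Pker t * ∫ u in (0:ℝ)..1, g u) := by
      rw [hadj2, hlin]
    rw [hgzero, mul_zero] at this
    have hx0y0 : x0 + y0 * t = (-(t-1/2)) * I1 + (-1) * I2 := by
      rw [hx0, hy0]; ring
    linarith
  -- integrability of |psiK|
  have habsleft : IntervalIntegrable (fun u => |psiK t u|) volume 0 t := by
    have h' : IntervalIntegrable (fun u => |Pker (t - u)|) volume 0 t :=
      ContinuousOn.intervalIntegrable hcP1.abs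
    rw [intervalIntegrable_iff] at h' ⊢
    apply h'.congr_fun _ measurableSet_uIoc
    intro u hu
    rw [Set.uIoc_of_le ht.1] at hu
    simp only [psiK, if_pos hu.2]
  have habsright : IntervalIntegrable (fun u => |psiK t u|) volume t 1 := by
    have h' : IntervalIntegrable (fun u => |Pker (t - u + 1)|) volume t 1 :=
      ContinuousOn.intervalIntegrable hcP2.abs
    rw [intervalIntegrable_iff] at h' ⊢
    apply h'.congr_fun _ measurableSet_uIoc
    intro u hu
    rw [Set.uIoc_of_le ht.2] at hu
    simp only [psiK, if_neg (not_le.mpr hu.1)]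
  have habsval : ∫ u in (0:ℝ)..1, |psiK t u| = 1/32 := by
    rw [← integral_add_adjacent_intervals habsleft habsright]
    have e1 : ∫ u in (0:ℝ)..t, |psiK t u| = ∫ u in (0:ℝ)..t, |Pker (t - u)| := by
      apply integral_congr
      intro u hu
      rw [Set.uIcc_of_le ht.1] at hu
      simp only [psiK, if_pos hu.2]
    have e2 : ∫ u in t..1, |psiK t u| = ∫ u in t..1, |Pker (t - u + 1)| := by
      apply integral_congr
      intro u hu
      rw [Set.uIcc_of_le ht.2] at hu
      rcases eq_or_lt_of_le hu.1 with h | h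
      · subst h
        simp only [psiK, le_refl, if_true, sub_self]
        norm_num [Pker]
      · simp only [psiK, if_neg (not_le.mpr h)]
    have e1' : (∫ u in (0:ℝ)..t, |Pker (t - u)|) = ∫ v in (0:ℝ)..t, |Pker v| := by
      have h := integral_comp_sub_left (a := 0) (b := t) (fun v => |Pker v|) t
      simpa using h
    have e2' : (∫ u in t..1, |Pker (t - u + 1)|) = ∫ v in t..1, |Pker v| := by
      have hfe : (fun u : ℝ => |Pker (t - u + 1)|) = fun u : ℝ => |Pker ((t+1) - u)| := by
        funext u; congr 1; ring
      have h := integral_comp_sub_left (a := t) (b := 1) (fun v => |Pker v|) (t+1)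
      rw [hfe]
      rw [h]
      norm_num
    rw [e1, e2, e1', e2',
      integral_add_adjacent_intervals (Pker_cont.abs.intervalIntegrable _ _)
        (Pker_cont.abs.intervalIntegrable _ _), integral_abs_Pker]
  -- the essential supremum bound
  obtain ⟨M0, hM0⟩ := hbd
  set M := essSup (fun t => |g t|) (volume.restrict (Set.Icc (0:ℝ) 1)) with hMdef
  have hbdd : Filter.IsBoundedUnder (· ≤ ·) (ae (volume.restrict (Set.Icc (0:ℝ) 1)))
      fun t => |g t| := ⟨M0, Filter.eventually_map.mpr hM0⟩
  have hMae : ∀ᵐ u ∂(volume.restrict (Set.Icc (0:ℝ) 1)), |g u| ≤ M := ae_le_essSup hbdd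
  have hMnn : 0 ≤ M := by
    have hne : volume.restrict (Set.Icc (0:ℝ) 1) ≠ 0 := by
      intro h
      have h2 := congrArg (fun m : Measure ℝ => m Set.univ) h
      simp [Measure.restrict_apply_univ, Real.volume_Icc] at h2
    haveI := MeasureTheory.ae_neBot.mpr hne
    obtain ⟨u, hu⟩ := hMae.exists
    exact le_trans (abs_nonneg _) hu
  have habsM : IntervalIntegrable (fun u => |psiK t u| * M) volume 0 1 :=
    (habsleft.trans habsright).mul_const M
  have hb1 : |x t| ≤ ∫ u in (0:ℝ)..1, |psiK t u * g u| := by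
    rw [hxrep]
    exact intervalIntegral.abs_integral_le_integral_abs (by norm_num)
  have hb2 : (∫ u in (0:ℝ)..1, |psiK t u * g u|) ≤ ∫ u in (0:ℝ)..1, |psiK t u| * M := by
    apply integral_mono_ae_restrict (by norm_num) hpsi_int.abs habsM
    filter_upwards [hMae] with u hu
    rw [abs_mul]
    exact mul_le_mul_of_nonneg_left hu (abs_nonneg _)
  have hb3 : (∫ u in (0:ℝ)..1, |psiK t u| * M) = (1/32) * M := by
    rw [intervalIntegral.integral_mul_const, habsval]
  linarith
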